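/- Let $1 \le q \le p \le \infty$ and $\phi \in \mathcal{G}_{q,p}$. Then the generalized Fofana space $(L^q,L^p)^\phi(\mathbb{R}^d) = \{ f \text{ measurable} : \|f\|_{(L^q,L^p)^\phi} < \infty \}$, equipped with the norm $\|\cdot\|_{(L^q,L^p)^\phi}$, is complete: every sequence $(f_m)_{m \in \mathbb{N}}$ in $(L^q,L^p)^\phi(\mathbb{R}^d)$ that is Cauchy with respect to $\|\cdot\|_{(L^q,L^p)^\phi}$ converges in this norm to some $f \in (L^q,L^p)^\phi(\mathbb{R}^d)$. -/

import Mathlib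

open MeasureTheory ENNReal Set Metric Filter

noncomputable section

/-- Shorthand for the Euclidean space `ℝ^d`. -/
abbrev Rd (d : ℕ) := EuclideanSpace ℝ (Fin d)

/-- The `L^p` "norm" (with values in `ℝ≥0∞`) of an `ℝ≥0∞`-valued function. -/
def eLpNormE {α : Type*} [MeasurableSpace α] (g : α → ℝ≥0∞) (p : ℝ≥0∞) (μ : Measure α) :
    ℝ≥0∞ :=
  if p = ∞ then essSup g μ else (∫⁻ x, g x ^ p.toReal ∂μ) ^ (1 / p.toReal)

/-- The discrete `ℓ^p` norm of an `ℝ≥0∞`-valued family. -/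
def lpNormE {ι : Type*} (a : ι → ℝ≥0∞) (p : ℝ≥0∞) : ℝ≥0∞ :=
  if p = ∞ then ⨆ k, a k else (∑' k, a k ^ p.toReal) ^ (1 / p.toReal)

/-- The continuous amalgam norm `‖f‖_{q,p,r}` of `f : ℝ^d → E`:
the `L^p` norm (in `y`) of `y ↦ ‖f · χ_{B(y,r)}‖_{L^q}`. -/
def contAmalgam (d : ℕ) {E : Type*} [NormedAddCommGroup E] (f : Rd d → E)
    (q p : ℝ≥0∞) (r : ℝ) : ℝ≥0∞ :=
  eLpNormE (fun y => eLpNorm ((Metric.ball y r).indicator f) q volume) p volume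

/-- The continuous amalgam norm of an `ℝ≥0∞`-valued function. -/
def contAmalgamE (d : ℕ) (g : Rd d → ℝ≥0∞) (q p : ℝ≥0∞) (r : ℝ) : ℝ≥0∞ :=
  eLpNormE (fun y => eLpNormE ((Metric.ball y r).indicator g) q volume) p volume

/-- The half-open cube `Q_k^r = ∏_i [r kᵢ, r (kᵢ + 1))` indexed by `k ∈ ℤ^d`. -/
def unitCube (d : ℕ) (r : ℝ) (k : Fin d → ℤ) : Set (Rd d) :=
  {x | ∀ i, r * k i ≤ x i ∧ x i < r * (k i + 1)}

/-- The discrete amalgam norm: the `ℓ^p` norm over `k ∈ ℤ^d` of `‖f χ_{Q_k^r}‖_{L^q}`. -/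
def discAmalgam (d : ℕ) {E : Type*} [NormedAddCommGroup E] (f : Rd d → E)
    (q p : ℝ≥0∞) (r : ℝ) : ℝ≥0∞ :=
  lpNormE (fun k : Fin d → ℤ => eLpNorm ((unitCube d r k).indicator f) q volume) p

/-- The class `𝒢_{q,p}` of weight functions: `φ` is positive and measurable on `(0,∞)`,
`t ↦ t^{d/p} φ(t)` is almost decreasing and `t ↦ t^{d/q} φ(t)` is almost increasing
(with the convention `1/∞ = 0`). -/
structure IsGqp (d : ℕ) (q p : ℝ≥0∞) (φ : ℝ → ℝ) : Prop where
  measurable : Measurable φ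
  pos : ∀ t : ℝ, 0 < t → 0 < φ t
  almost_decreasing : ∃ C : ℝ, 0 < C ∧ ∀ r s : ℝ, 0 < r → r ≤ s →
    s ^ ((d : ℝ) * (1 / p).toReal) * φ s ≤ C * (r ^ ((d : ℝ) * (1 / p).toReal) * φ r)
  almost_increasing : ∃ C : ℝ, 0 < C ∧ ∀ r s : ℝ, 0 < r → r ≤ s →
    r ^ ((d : ℝ) * (1 / q).toReal) * φ r ≤ C * (s ^ ((d : ℝ) * (1 / q).toReal) * φ s)

/-- The generalized Fofana norm
`‖f‖_{(L^q,L^p)^φ} = sup_{r>0} φ(r)⁻¹ r^{d(-1/q - 1/p)} ‖f‖_{q,p,r}`. -/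
def fofanaNorm (d : ℕ) {E : Type*} [NormedAddCommGroup E] (f : Rd d → E)
    (q p : ℝ≥0∞) (φ : ℝ → ℝ) : ℝ≥0∞ :=
  ⨆ r : {r : ℝ // 0 < r},
    ENNReal.ofReal ((φ r)⁻¹ * (r : ℝ) ^ ((d : ℝ) * (-(1 / q).toReal - (1 / p).toReal))) *
      contAmalgam d f q p r

/-- The generalized Fofana norm of an `ℝ≥0∞`-valued function. -/
def fofanaNormE (d : ℕ) (g : Rd d → ℝ≥0∞) (q p : ℝ≥0∞) (φ : ℝ → ℝ) : ℝ≥0∞ :=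
  ⨆ r : {r : ℝ // 0 < r},
    ENNReal.ofReal ((φ r)⁻¹ * (r : ℝ) ^ ((d : ℝ) * (-(1 / q).toReal - (1 / p).toReal))) *
      contAmalgamE d g q p r

/-- The discrete variant of the generalized Fofana norm,
`sup_{r>0} φ(r)⁻¹ r^{-d/q} ‖f‖~_{q,p,r}`. -/
def fofanaNormDisc (d : ℕ) {E : Type*} [NormedAddCommGroup E] (f : Rd d → E)
    (q p : ℝ≥0∞) (φ : ℝ → ℝ) : ℝ≥0∞ :=
  ⨆ r : {r : ℝ // 0 < r},
    ENNReal.ofReal ((φ r)⁻¹ * (r : ℝ) ^ (-(d : ℝ) * (1 / q).toReal)) *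
      discAmalgam d f q p r

/-- The Hardy–Littlewood maximal function (with values in `ℝ≥0∞`). -/
def hlMax (d : ℕ) {E : Type*} [NormedAddCommGroup E] (f : Rd d → E) (x : Rd d) : ℝ≥0∞ :=
  ⨆ r : {r : ℝ // 0 < r},
    (volume (Metric.ball x (r : ℝ)))⁻¹ * ∫⁻ y in Metric.ball x (r : ℝ), (‖f y‖₊ : ℝ≥0∞)

section Helpers

variable {α : Type*} [MeasurableSpace α] {μ : Measure α}

lemma eLpNormE_mono {g h : α → ℝ≥0∞} {p : ℝ≥0∞} (hgh : ∀ᵐ x ∂μ, g x ≤ h x) :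
    eLpNormE g p μ ≤ eLpNormE h p μ := by
  unfold eLpNormE
  split_ifs with hp
  · exact essSup_mono_ae hgh
  · refine ENNReal.rpow_le_rpow ?_ (by positivity)
    refine lintegral_mono_ae ?_
    filter_upwards [hgh] with x hx using ENNReal.rpow_le_rpow hx ENNReal.toReal_nonneg

lemma eLpNormE_add_le {g h : α → ℝ≥0∞} {p : ℝ≥0∞} (hp : 1 ≤ p)
    (hmeas : p ≠ ∞ → AEMeasurable g μ ∧ AEMeasurable h μ) :
    eLpNormE (fun x => g x + h x) p μ ≤ eLpNormE g p μ + eLpNormE h p μ := by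
  unfold eLpNormE
  split_ifs with hptop
  · exact ENNReal.essSup_add_le g h
  · obtain ⟨hg, hh⟩ := hmeas hptop
    have hp1 : (1 : ℝ) ≤ p.toReal := by
      rw [← ENNReal.toReal_one]
      exact ENNReal.toReal_mono hptop hp
    exact ENNReal.lintegral_Lp_add_le hg hh hp1

lemma liminf_rpow (u : ℕ → ℝ≥0∞) {c : ℝ} (hc : 0 < c) :
    (Filter.liminf u Filter.atTop) ^ c = Filter.liminf (fun n => u n ^ c) Filter.atTop :=
  OrderIso.liminf_apply (ENNReal.orderIsoRpow c hc) (u := u) (f := Filter.atTop) (by isBoundedDefault) (by isBoundedDefault) (by isBoundedDefault) (by isBoundedDefault)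

lemma eLpNormE_liminf_le {G : α → ℝ≥0∞} {H : ℕ → α → ℝ≥0∞} {p : ℝ≥0∞} (hp : 1 ≤ p)
    (hH : p ≠ ∞ → ∀ n, AEMeasurable (H n) μ)
    (hle : ∀ x, G x ≤ Filter.liminf (fun n => H n x) Filter.atTop) :
    eLpNormE G p μ ≤ Filter.liminf (fun n => eLpNormE (H n) p μ) Filter.atTop := by
  unfold eLpNormE
  split_ifs with hptop
  · refine le_trans (essSup_mono_ae (Filter.Eventually.of_forall hle)) ?_
    exact ENNReal.essSup_liminf_le _
  · have hpp : 0 < p.toReal := ENNReal.toReal_pos (zero_lt_one.trans_le hp).ne' hptop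
    calc (∫⁻ x, G x ^ p.toReal ∂μ) ^ (1 / p.toReal)
        ≤ (∫⁻ x, Filter.liminf (fun n => H n x ^ p.toReal) Filter.atTop ∂μ) ^ (1 / p.toReal) := by
          refine ENNReal.rpow_le_rpow (lintegral_mono fun x => ?_) (by positivity)
          rw [← liminf_rpow _ hpp]
          exact ENNReal.rpow_le_rpow (hle x) hpp.le
      _ ≤ (Filter.liminf (fun n => ∫⁻ x, H n x ^ p.toReal ∂μ) Filter.atTop) ^ (1 / p.toReal) := by
          refine ENNReal.rpow_le_rpow ?_ (by positivity)
          exact lintegral_liminf_le' fun n => (hH hptop n).pow_const _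
      _ ≤ Filter.liminf (fun n => (∫⁻ x, H n x ^ p.toReal ∂μ) ^ (1 / p.toReal)) Filter.atTop := by
          rw [← liminf_rpow _ (by positivity : (0:ℝ) < 1 / p.toReal)]

end Helpers

section Helpers2

lemma amalgam_fn_measurable {d : ℕ} {f : Rd d → ℂ} (hf : Measurable f) {q : ℝ≥0∞}
    (hq : q ≠ ∞) (r : ℝ) :
    Measurable (fun y : Rd d => eLpNorm ((Metric.ball y r).indicator f) q volume) := by
  rcases eq_or_ne q 0 with rfl | hq0
  · simp [eLpNorm_exponent_zero, measurable_const]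
  have hqq : 0 < q.toReal := ENNReal.toReal_pos hq0 hq
  have key : ∀ y : Rd d, eLpNorm ((Metric.ball y r).indicator f) q volume
      = (∫⁻ x, ({z : Rd d × Rd d | dist z.2 z.1 < r}).indicator
          (fun z => (‖f z.2‖₊ : ℝ≥0∞) ^ q.toReal) (y, x) ∂volume) ^ (1 / q.toReal) := by
    intro y
    rw [eLpNorm_eq_lintegral_rpow_enorm_toReal hq0 hq]
    congr 1
    refine lintegral_congr fun x => ?_
    by_cases hx : x ∈ Metric.ball y r
    · have hx' : ((y, x) : Rd d × Rd d) ∈ {z : Rd d × Rd d | dist z.2 z.1 < r} := by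
        simpa [Metric.mem_ball] using hx
      simp [Set.indicator_of_mem hx, Set.indicator_of_mem hx']; rfl
    · have hx' : ((y, x) : Rd d × Rd d) ∉ {z : Rd d × Rd d | dist z.2 z.1 < r} := by
        simpa [Metric.mem_ball] using hx
      simp [Set.indicator_of_notMem hx, Set.indicator_of_notMem hx',
        ENNReal.zero_rpow_of_pos hqq]
  simp_rw [key]
  refine Measurable.pow_const ?_ _
  refine Measurable.lintegral_prod_right ?_
  refine Measurable.indicator ?_ ?_
  · exact ((measurable_nnnorm.comp (hf.comp measurable_snd)).coe_nnreal_ennreal).pow_const _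
  · exact measurableSet_lt (measurable_dist.comp (measurable_snd.prodMk measurable_fst))
      measurable_const

lemma local_bound {d : ℕ} {q p : ℝ≥0∞} (hq : 1 ≤ q) (hqp : q ≤ p) (z : Rd d) :
    ∃ C : ℝ≥0∞, C ≠ ∞ ∧ ∀ h : Rd d → ℂ, Measurable h →
      eLpNorm ((Metric.ball z 1).indicator h) q volume ≤ C * contAmalgam d h q p 2 := by
  have hmono : ∀ (h : Rd d → ℂ), ∀ y ∈ Metric.ball z 1,
      eLpNorm ((Metric.ball z 1).indicator h) q volume
        ≤ eLpNorm ((Metric.ball y 2).indicator h) q volume := by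
    intro h y hy
    refine eLpNorm_mono fun x => ?_
    by_cases hx : x ∈ Metric.ball z 1
    · have hx2 : x ∈ Metric.ball y 2 := by
        rw [Metric.mem_ball] at *
        calc dist x y ≤ dist x z + dist z y := dist_triangle x z y
          _ < 1 + 1 := by rw [dist_comm z y] at *; exact add_lt_add hx hy
          _ = 2 := by norm_num
      simp [Set.indicator_of_mem hx, Set.indicator_of_mem hx2]
    · simp [Set.indicator_of_notMem hx]
  have hvol_pos : 0 < volume (Metric.ball z 1) := Metric.measure_ball_pos volume z one_pos
  have hvol_lt : volume (Metric.ball z 1) < ∞ := measure_ball_lt_top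
  by_cases hp : p = ∞
  · refine ⟨1, one_ne_top, fun h hmeas => ?_⟩
    rw [one_mul, contAmalgam, eLpNormE, if_pos hp]
    set K := eLpNorm ((Metric.ball z 1).indicator h) q volume with hK
    by_contra hlt
    push_neg at hlt
    have hae := ENNReal.ae_le_essSup (μ := volume)
      (fun y : Rd d => eLpNorm ((Metric.ball y 2).indicator h) q volume)
    have : ∀ᵐ y : Rd d ∂volume, y ∉ Metric.ball z 1 := by
      filter_upwards [hae] with y hy hyz
      exact absurd ((hmono h y hyz).trans hy) (not_le.mpr hlt)
    have : volume (Metric.ball z 1) = 0 := by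
      have := this
      rw [MeasureTheory.ae_iff] at this
      simp at this; exact this
    exact absurd this hvol_pos.ne'
  · have hq' : q ≠ ∞ := fun h => hp (top_le_iff.mp (h ▸ hqp))
    have hpp : 0 < p.toReal := ENNReal.toReal_pos (zero_lt_one.trans_le (hq.trans hqp)).ne' hp
    set V := volume (Metric.ball z 1) with hV
    refine ⟨V ^ (-(1 / p.toReal)), ?_, fun h hmeas => ?_⟩
    · simp only [ENNReal.rpow_neg]
      exact ENNReal.inv_ne_top.mpr (by
        simpa [ENNReal.rpow_eq_zero_iff, hvol_pos.ne', hvol_lt.ne] using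
          (ENNReal.rpow_pos hvol_pos hvol_lt.ne).ne')
    set K := eLpNorm ((Metric.ball z 1).indicator h) q volume with hK
    set Y := fun y : Rd d => eLpNorm ((Metric.ball y 2).indicator h) q volume with hYdef
    have hYmeas : Measurable Y := amalgam_fn_measurable hmeas hq' 2
    have hint : K ^ p.toReal * V ≤ ∫⁻ y, Y y ^ p.toReal ∂volume := by
      calc K ^ p.toReal * V = ∫⁻ _ in Metric.ball z 1, K ^ p.toReal ∂volume := by
            rw [MeasureTheory.setLIntegral_const]
        _ ≤ ∫⁻ y in Metric.ball z 1, Y y ^ p.toReal ∂volume := by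
            refine MeasureTheory.setLIntegral_mono (hYmeas.pow_const _) fun y hy => ?_
            exact ENNReal.rpow_le_rpow (hmono h y hy) hpp.le
        _ ≤ ∫⁻ y, Y y ^ p.toReal ∂volume := MeasureTheory.setLIntegral_le_lintegral _ _
    have hA : contAmalgam d h q p 2 = (∫⁻ y, Y y ^ p.toReal ∂volume) ^ (1 / p.toReal) := by
      rw [contAmalgam, eLpNormE, if_neg hp]
    have hKV : K * V ^ (1 / p.toReal) ≤ contAmalgam d h q p 2 := by
      rw [hA]
      calc K * V ^ (1 / p.toReal) = (K ^ p.toReal * V) ^ (1 / p.toReal) := by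
            rw [ENNReal.mul_rpow_of_nonneg _ _ (by positivity), ← ENNReal.rpow_mul,
              mul_one_div_cancel hpp.ne', ENNReal.rpow_one]
        _ ≤ _ := ENNReal.rpow_le_rpow hint (by positivity)
    calc K = K * V ^ (1 / p.toReal) * V ^ (-(1 / p.toReal)) := by
          rw [mul_assoc, ← ENNReal.rpow_add _ _ hvol_pos.ne' hvol_lt.ne]
          simp
      _ ≤ contAmalgam d h q p 2 * V ^ (-(1 / p.toReal)) := mul_le_mul_left hKV _
      _ = V ^ (-(1 / p.toReal)) * contAmalgam d h q p 2 := mul_comm _ _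

end Helpers2

section Helpers3

/-- The normalizing constant in the Fofana norm. -/
def fofC (d : ℕ) (q p : ℝ≥0∞) (φ : ℝ → ℝ) (r : ℝ) : ℝ≥0∞ :=
  ENNReal.ofReal ((φ r)⁻¹ * (r : ℝ) ^ ((d : ℝ) * (-(1 / q).toReal - (1 / p).toReal)))

lemma fofC_ne_top (d : ℕ) (q p : ℝ≥0∞) (φ : ℝ → ℝ) (r : ℝ) : fofC d q p φ r ≠ ∞ :=
  ENNReal.ofReal_ne_top

lemma fofC_pos {d : ℕ} {q p : ℝ≥0∞} {φ : ℝ → ℝ} (hφ : IsGqp d q p φ) {r : ℝ} (hr : 0 < r) :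
    0 < fofC d q p φ r := by
  refine ENNReal.ofReal_pos.mpr ?_
  exact mul_pos (inv_pos.mpr (hφ.pos r hr)) (Real.rpow_pos_of_pos hr _)

lemma fofanaNorm_eq (d : ℕ) (f : Rd d → ℂ) (q p : ℝ≥0∞) (φ : ℝ → ℝ) :
    fofanaNorm d f q p φ = ⨆ r : {r : ℝ // 0 < r}, fofC d q p φ r * contAmalgam d f q p r := rfl

lemma le_fofanaNorm (d : ℕ) (f : Rd d → ℂ) (q p : ℝ≥0∞) (φ : ℝ → ℝ) {r : ℝ} (hr : 0 < r) :
    fofC d q p φ r * contAmalgam d f q p r ≤ fofanaNorm d f q p φ :=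
  le_iSup (fun s : {s : ℝ // 0 < s} => fofC d q p φ s * contAmalgam d f q p s) ⟨r, hr⟩

lemma contAmalgam_neg (d : ℕ) (f : Rd d → ℂ) (q p : ℝ≥0∞) (r : ℝ) :
    contAmalgam d (-f) q p r = contAmalgam d f q p r := by
  unfold contAmalgam
  congr 1
  funext y
  rw [Set.indicator_neg', eLpNorm_neg]

lemma fofanaNorm_neg (d : ℕ) (f : Rd d → ℂ) (q p : ℝ≥0∞) (φ : ℝ → ℝ) :
    fofanaNorm d (-f) q p φ = fofanaNorm d f q p φ := by
  unfold fofanaNorm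
  simp_rw [contAmalgam_neg]

lemma fofanaNorm_add_le {d : ℕ} {q p : ℝ≥0∞} (hq : 1 ≤ q) (hqp : q ≤ p) (φ : ℝ → ℝ)
    {a b : Rd d → ℂ} (ha : Measurable a) (hb : Measurable b) :
    fofanaNorm d (a + b) q p φ ≤ fofanaNorm d a q p φ + fofanaNorm d b q p φ := by
  rw [fofanaNorm_eq]
  refine iSup_le fun r => ?_
  have hptw : ∀ y : Rd d, eLpNorm ((Metric.ball y (r : ℝ)).indicator (a + b)) q volume
      ≤ eLpNorm ((Metric.ball y (r : ℝ)).indicator a) q volume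
        + eLpNorm ((Metric.ball y (r : ℝ)).indicator b) q volume := by
    intro y
    rw [Set.indicator_add']
    exact eLpNorm_add_le ((ha.indicator measurableSet_ball).aestronglyMeasurable)
      ((hb.indicator measurableSet_ball).aestronglyMeasurable) hq
  have hstep : contAmalgam d (a + b) q p r ≤ contAmalgam d a q p r + contAmalgam d b q p r := by
    unfold contAmalgam
    refine le_trans (eLpNormE_mono (Filter.Eventually.of_forall hptw)) ?_
    refine eLpNormE_add_le (hq.trans hqp) fun hp => ?_
    have hq' : q ≠ ∞ := fun h => hp (top_le_iff.mp (h ▸ hqp))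
    exact ⟨(amalgam_fn_measurable ha hq' r).aemeasurable,
      (amalgam_fn_measurable hb hq' r).aemeasurable⟩
  calc fofC d q p φ r * contAmalgam d (a + b) q p r
      ≤ fofC d q p φ r * contAmalgam d a q p r + fofC d q p φ r * contAmalgam d b q p r := by
        rw [← mul_add]; exact mul_le_mul_right hstep _
    _ ≤ _ := add_le_add (le_fofanaNorm d a q p φ r.2) (le_fofanaNorm d b q p φ r.2)

lemma fofanaNorm_liminf_le {d : ℕ} {q p : ℝ≥0∞} (hq : 1 ≤ q) (hqp : q ≤ p) (φ : ℝ → ℝ)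
    {a : Rd d → ℂ} {F : ℕ → Rd d → ℂ} (hF : ∀ n, Measurable (F n))
    (hconv : ∀ᵐ x : Rd d ∂volume, Filter.Tendsto (fun n => F n x) Filter.atTop (nhds (a x))) :
    fofanaNorm d a q p φ ≤ Filter.liminf (fun n => fofanaNorm d (F n) q p φ) Filter.atTop := by
  rw [fofanaNorm_eq]
  refine iSup_le fun r => ?_
  have hcA : contAmalgam d a q p r
      ≤ Filter.liminf (fun n => contAmalgam d (F n) q p r) Filter.atTop := by
    unfold contAmalgam
    refine eLpNormE_liminf_le (hq.trans hqp) ?_ ?_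
    · intro hp n
      have hq' : q ≠ ∞ := fun h => hp (top_le_iff.mp (h ▸ hqp))
      exact (amalgam_fn_measurable (hF n) hq' r).aemeasurable
    · intro y
      refine MeasureTheory.Lp.eLpNorm_lim_le_liminf_eLpNorm
        (fun n => ((hF n).indicator measurableSet_ball).aestronglyMeasurable) _ ?_
      filter_upwards [hconv] with x hx
      by_cases hmem : x ∈ Metric.ball y (r : ℝ)
      · simpa [Set.indicator_of_mem hmem] using hx
      · simp [Set.indicator_of_notMem hmem, tendsto_const_nhds]
  calc fofC d q p φ r * contAmalgam d a q p r
      ≤ fofC d q p φ r * Filter.liminf (fun n => contAmalgam d (F n) q p r) Filter.atTop :=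
        mul_le_mul_right hcA _
    _ = Filter.liminf (fun n => fofC d q p φ r * contAmalgam d (F n) q p r) Filter.atTop := by
        refine Monotone.map_liminf_of_continuousAt (f := fun x => fofC d q p φ r * x)
          (fun u v huv => mul_le_mul_right huv _) _ ?_ (by isBoundedDefault) (by isBoundedDefault)
        exact (ENNReal.continuous_const_mul (fofC_ne_top d q p φ r)).continuousAt
    _ ≤ Filter.liminf (fun n => fofanaNorm d (F n) q p φ) Filter.atTop := by
        refine Filter.liminf_le_liminf (Filter.Eventually.of_forall fun n => ?_)
        exact le_fofanaNorm d (F n) q p φ r.2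

end Helpers3

section MainProof

lemma summable_aux {d : ℕ} {q p : ℝ≥0∞} (hq : 1 ≤ q) (hqp : q ≤ p) {φ : ℝ → ℝ}
    (hφ : IsGqp d q p φ) (z : Rd d) {h : ℕ → Rd d → ℂ} (hhm : ∀ k, Measurable (h k))
    (hsmall : ∀ k, fofanaNorm d (h k) q p φ < ENNReal.ofReal ((1/2 : ℝ) ^ k)) :
    ∀ᵐ x ∂(volume.restrict (Metric.ball z 1)), Summable fun k => h k x := by
  obtain ⟨C, hC, hCle⟩ := local_bound hq hqp z
  set c2 := fofC d q p φ 2 with hc2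
  have hc2pos : 0 < c2 := fofC_pos hφ two_pos
  have hc2top : c2 ≠ ∞ := fofC_ne_top d q p φ 2
  have hcontA : ∀ k, contAmalgam d (h k) q p 2 ≤ c2⁻¹ * ENNReal.ofReal ((1/2 : ℝ) ^ k) := by
    intro k
    have h1 : c2 * contAmalgam d (h k) q p 2 ≤ ENNReal.ofReal ((1/2 : ℝ) ^ k) :=
      (le_fofanaNorm d (h k) q p φ two_pos).trans (hsmall k).le
    calc contAmalgam d (h k) q p 2 = c2⁻¹ * (c2 * contAmalgam d (h k) q p 2) := by
          rw [← mul_assoc, ENNReal.inv_mul_cancel hc2pos.ne' hc2top, one_mul]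
      _ ≤ _ := mul_le_mul_right h1 _
  set V := volume (Metric.ball z 1) with hV
  have hVlt : V < ∞ := measure_ball_lt_top
  set D := V ^ (1 - 1 / q.toReal) with hD
  have hDtop : D ≠ ∞ := by
    refine ENNReal.rpow_ne_top_of_nonneg ?_ hVlt.ne
    rcases eq_or_ne q ∞ with rfl | hq'
    · simp
    · have : 1 ≤ q.toReal := by
        rw [← ENNReal.toReal_one]; exact ENNReal.toReal_mono hq' hq
      have : 1 / q.toReal ≤ 1 := by
        rw [div_le_one (by linarith)]; linarith
      linarith
  have hL1 : ∀ k, (∫⁻ x in Metric.ball z 1, (‖h k x‖₊ : ℝ≥0∞) ∂volume)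
      ≤ D * (C * (c2⁻¹ * ENNReal.ofReal ((1/2 : ℝ) ^ k))) := by
    intro k
    have e1 : (∫⁻ x in Metric.ball z 1, (‖h k x‖₊ : ℝ≥0∞) ∂volume)
        = eLpNorm (h k) 1 (volume.restrict (Metric.ball z 1)) := by
      rw [eLpNorm_one_eq_lintegral_enorm]; rfl
    have e2 : eLpNorm (h k) 1 (volume.restrict (Metric.ball z 1))
        ≤ eLpNorm (h k) q (volume.restrict (Metric.ball z 1))
          * (volume.restrict (Metric.ball z 1)) Set.univ ^ (1 / (1:ℝ≥0∞).toReal - 1 / q.toReal) :=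
      eLpNorm_le_eLpNorm_mul_rpow_measure_univ hq (hhm k).aestronglyMeasurable
    have e3 : eLpNorm (h k) q (volume.restrict (Metric.ball z 1))
        = eLpNorm ((Metric.ball z 1).indicator (h k)) q volume :=
      (eLpNorm_indicator_eq_eLpNorm_restrict measurableSet_ball).symm
    have e4 : (volume.restrict (Metric.ball z 1)) Set.univ ^ (1 / (1:ℝ≥0∞).toReal - 1 / q.toReal)
        = D := by
      rw [Measure.restrict_apply MeasurableSet.univ, Set.univ_inter]
      norm_num [hD]
      rfl
    calc (∫⁻ x in Metric.ball z 1, (‖h k x‖₊ : ℝ≥0∞) ∂volume)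
        ≤ eLpNorm ((Metric.ball z 1).indicator (h k)) q volume * D := by
          rw [e1, ← e3, ← e4]; exact e2
      _ ≤ (C * contAmalgam d (h k) q p 2) * D :=
          mul_le_mul_left (hCle (h k) (hhm k)) _
      _ ≤ (C * (c2⁻¹ * ENNReal.ofReal ((1/2 : ℝ) ^ k))) * D :=
          mul_le_mul_left (mul_le_mul_right (hcontA k) _) _
      _ = D * (C * (c2⁻¹ * ENNReal.ofReal ((1/2 : ℝ) ^ k))) := mul_comm _ _
  have hgeo : (∑' k : ℕ, ENNReal.ofReal ((1/2 : ℝ) ^ k)) ≠ ∞ := by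
    have : ∀ k : ℕ, ENNReal.ofReal ((1/2 : ℝ) ^ k) = (ENNReal.ofReal (1/2)) ^ k := by
      intro k; rw [← ENNReal.ofReal_pow (by norm_num)]
    simp_rw [this, ENNReal.tsum_geometric]
    refine ENNReal.inv_ne_top.mpr ?_
    have h12 : (1:ℝ≥0∞) - ENNReal.ofReal (1/2) = ENNReal.ofReal (1/2) := by
      rw [← ENNReal.ofReal_one, ← ENNReal.ofReal_sub _ (by norm_num)]; norm_num
    rw [h12]
    exact (ENNReal.ofReal_pos.mpr (by norm_num)).ne'
  have hsum : (∫⁻ x in Metric.ball z 1, ∑' k, (‖h k x‖₊ : ℝ≥0∞) ∂volume) < ∞ := by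
    rw [lintegral_tsum fun k => ((hhm k).nnnorm.coe_nnreal_ennreal).aemeasurable]
    calc (∑' k, ∫⁻ x in Metric.ball z 1, (‖h k x‖₊ : ℝ≥0∞) ∂volume)
        ≤ ∑' k, D * (C * (c2⁻¹ * ENNReal.ofReal ((1/2 : ℝ) ^ k))) :=
          ENNReal.tsum_le_tsum hL1
      _ = D * (C * (c2⁻¹ * ∑' k, ENNReal.ofReal ((1/2 : ℝ) ^ k))) := by
          rw [ENNReal.tsum_mul_left, ENNReal.tsum_mul_left, ENNReal.tsum_mul_left]
      _ < ∞ :=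
          ENNReal.mul_lt_top hDtop.lt_top (ENNReal.mul_lt_top hC.lt_top
            (ENNReal.mul_lt_top (ENNReal.inv_ne_top.mpr hc2pos.ne').lt_top
              (lt_top_iff_ne_top.mpr hgeo)))
  have hfin : ∀ᵐ x ∂(volume.restrict (Metric.ball z 1)),
      (∑' k, (‖h k x‖₊ : ℝ≥0∞)) < ∞ := by
    refine ae_lt_top ?_ hsum.ne
    exact Measurable.ennreal_tsum fun k => (hhm k).nnnorm.coe_nnreal_ennreal
  filter_upwards [hfin] with x hx
  have hsummable : Summable fun k => ‖h k x‖₊ :=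
    ENNReal.tsum_coe_ne_top_iff_summable.mp hx.ne
  exact Summable.of_nnnorm hsummable

theorem fofana_complete' (d : ℕ) (q p : ℝ≥0∞) (hq : 1 ≤ q) (hqp : q ≤ p)
    (φ : ℝ → ℝ) (hφ : IsGqp d q p φ)
    (f : ℕ → Rd d → ℂ) (hmeas : ∀ m, Measurable (f m))
    (hfin : ∀ m, fofanaNorm d (f m) q p φ < ⊤)
    (hcauchy : ∀ ε : ℝ, 0 < ε → ∃ N : ℕ, ∀ m ≥ N, ∀ n ≥ N,
      fofanaNorm d (f m - f n) q p φ < ENNReal.ofReal ε) :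
    ∃ g : Rd d → ℂ, Measurable g ∧ fofanaNorm d g q p φ < ⊤ ∧
      Filter.Tendsto (fun m => fofanaNorm d (f m - g) q p φ) Filter.atTop (nhds 0) := by
  choose M hM using fun k : ℕ => hcauchy ((1/2 : ℝ) ^ k) (by positivity)
  set n : ℕ → ℕ := fun k => (Finset.range (k+1)).sup M + k with hn
  have hnk : ∀ k, k ≤ n k := fun k => Nat.le_add_left k _
  have hnM : ∀ j k, j ≤ k → M j ≤ n k := by
    intro j k hjk
    exact le_trans (Finset.le_sup (Finset.mem_range.mpr (Nat.lt_succ_of_le hjk)))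
      (Nat.le_add_right _ _)
  have hdiff : ∀ k, fofanaNorm d (f (n (k+1)) - f (n k)) q p φ
      < ENNReal.ofReal ((1/2 : ℝ) ^ k) := by
    intro k
    exact hM k (n (k+1)) (hnM k (k+1) (Nat.le_succ k)) (n k) (hnM k k le_rfl)
  set h : ℕ → Rd d → ℂ := fun k => f (n (k+1)) - f (n k) with hh
  have hhm : ∀ k, Measurable (h k) := fun k => (hmeas _).sub (hmeas _)
  -- a.e. convergence of the subsequence
  have hcover : ∀ᵐ x : Rd d ∂volume,
      ∃ l : ℂ, Filter.Tendsto (fun k => f (n k) x) Filter.atTop (nhds l) := by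
    set P : Rd d → Prop := fun x =>
      ∃ l : ℂ, Filter.Tendsto (fun k => f (n k) x) Filter.atTop (nhds l) with hP
    have hball : ∀ z : Rd d, volume ({x | ¬ P x} ∩ Metric.ball z 1) = 0 := by
      intro z
      have := summable_aux hq hqp hφ z hhm hdiff
      have hPae : ∀ᵐ x ∂(volume.restrict (Metric.ball z 1)), P x := by
        filter_upwards [this] with x hx
        have hhs : Filter.Tendsto (fun K => ∑ k ∈ Finset.range K, h k x) Filter.atTop
            (nhds (∑' k, h k x)) := hx.hasSum.tendsto_sum_nat
        have htel : ∀ K, ∑ k ∈ Finset.range K, h k x = f (n K) x - f (n 0) x := by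
          intro K
          simpa [hh] using Finset.sum_range_sub (fun k => f (n k) x) K
        refine ⟨(∑' k, h k x) + f (n 0) x, ?_⟩
        have := hhs.add_const (f (n 0) x)
        refine this.congr fun K => ?_
        rw [htel K]; ring
      rw [MeasureTheory.ae_iff, Measure.restrict_apply' measurableSet_ball] at hPae
      exact hPae
    rw [MeasureTheory.ae_iff]
    show volume {x | ¬ P x} = 0
    refine le_antisymm ?_ zero_le
    obtain ⟨u, hu⟩ : ∃ u : ℕ → Rd d, DenseRange u :=
      ⟨TopologicalSpace.denseSeq (Rd d), TopologicalSpace.denseRange_denseSeq _⟩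
    have hsub : {x | ¬ P x} ⊆ ⋃ j, ({x | ¬ P x} ∩ Metric.ball (u j) 1) := by
      intro x hx
      obtain ⟨j, hj⟩ := (Metric.denseRange_iff.mp hu) x 1 one_pos
      exact Set.mem_iUnion.mpr ⟨j, hx, Metric.mem_ball.mpr hj⟩
    calc volume {x | ¬ P x} ≤ volume (⋃ j, ({x | ¬ P x} ∩ Metric.ball (u j) 1)) :=
          measure_mono hsub
      _ ≤ ∑' j, volume ({x | ¬ P x} ∩ Metric.ball (u j) 1) := measure_iUnion_le _
      _ = 0 := by simp [hball]
  obtain ⟨g, hgmeas, hgtend⟩ := measurable_limit_of_tendsto_metrizable_ae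
    (fun k => (hmeas (n k)).aemeasurable) hcover
  -- tail estimate
  have key : ∀ ε : ℝ, 0 < ε → ∃ N, ∀ m ≥ N,
      fofanaNorm d (f m - g) q p φ ≤ ENNReal.ofReal ε := by
    intro ε hε
    obtain ⟨N, hN⟩ := hcauchy ε hε
    refine ⟨N, fun m hm => ?_⟩
    have hconv : ∀ᵐ x : Rd d ∂volume, Filter.Tendsto (fun k => (f m - f (n k)) x)
        Filter.atTop (nhds ((f m - g) x)) := by
      filter_upwards [hgtend] with x hx
      simpa [Pi.sub_apply] using Filter.Tendsto.const_sub (f m x) hx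
    have hlim := fofanaNorm_liminf_le hq hqp φ
      (fun k => (hmeas m).sub (hmeas (n k))) hconv
    refine hlim.trans ?_
    have hev : ∀ᶠ k in Filter.atTop,
        fofanaNorm d (f m - f (n k)) q p φ ≤ ENNReal.ofReal ε := by
      refine Filter.eventually_atTop.mpr ⟨N, fun k hk => ?_⟩
      exact (hN m hm (n k) (hk.trans (hnk k))).le
    calc Filter.liminf (fun k => fofanaNorm d (f m - f (n k)) q p φ) Filter.atTop
        ≤ Filter.liminf (fun _ => ENNReal.ofReal ε) Filter.atTop :=
          Filter.liminf_le_liminf hev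
      _ = ENNReal.ofReal ε := Filter.liminf_const _
  have htend : Filter.Tendsto (fun m => fofanaNorm d (f m - g) q p φ)
      Filter.atTop (nhds 0) := by
    rw [ENNReal.tendsto_nhds_zero]
    intro ε hε
    obtain ⟨ε', hε'0, hε'le⟩ : ∃ ε' : ℝ, 0 < ε' ∧ ENNReal.ofReal ε' ≤ ε := by
      rcases eq_or_ne ε ∞ with rfl | hne
      · exact ⟨1, one_pos, le_top⟩
      · exact ⟨ε.toReal, ENNReal.toReal_pos hε.ne' hne, (ENNReal.ofReal_toReal hne).le⟩
    obtain ⟨N, hN⟩ := key ε' hε'0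
    exact Filter.eventually_atTop.mpr ⟨N, fun m hm => (hN m hm).trans hε'le⟩
  -- finiteness
  obtain ⟨N1, hN1⟩ := key 1 one_pos
  have hgm : fofanaNorm d (f N1 - g) q p φ ≤ ENNReal.ofReal 1 := hN1 N1 le_rfl
  have hswap : fofanaNorm d (g - f N1) q p φ = fofanaNorm d (f N1 - g) q p φ := by
    rw [← fofanaNorm_neg d (f N1 - g), neg_sub]
  have hfing : fofanaNorm d g q p φ < ⊤ := by
    have heq : g = (g - f N1) + f N1 := by funext x; simp
    rw [heq]
    refine lt_of_le_of_lt (fofanaNorm_add_le hq hqp φ (hgmeas.sub (hmeas N1)) (hmeas N1)) ?_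
    refine ENNReal.add_lt_top.mpr ⟨?_, hfin N1⟩
    rw [hswap]
    exact lt_of_le_of_lt hgm (by simp)
  exact ⟨g, hgmeas, hfing, htend⟩

end MainProof

/-- the generalized Fofana space `(L^q,L^p)^φ(ℝ^d)` is complete:
every Cauchy sequence (w.r.t. the Fofana norm) of measurable functions with finite
Fofana norm converges in the Fofana norm to a measurable function with finite norm. -/
theorem fofana_complete (d : ℕ) (q p : ℝ≥0∞) (hq : 1 ≤ q) (hqp : q ≤ p)
    (φ : ℝ → ℝ) (hφ : IsGqp d q p φ)
    (f : ℕ → Rd d → ℂ) (hmeas : ∀ m, Measurable (f m))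
    (hfin : ∀ m, fofanaNorm d (f m) q p φ < ⊤)
    (hcauchy : ∀ ε : ℝ, 0 < ε → ∃ N : ℕ, ∀ m ≥ N, ∀ n ≥ N,
      fofanaNorm d (f m - f n) q p φ < ENNReal.ofReal ε) :
    ∃ g : Rd d → ℂ, Measurable g ∧ fofanaNorm d g q p φ < ⊤ ∧
      Filter.Tendsto (fun m => fofanaNorm d (f m - g) q p φ) Filter.atTop (nhds 0) := by
  exact fofana_complete' d q p hq hqp φ hφ f hmeas hfin hcauchy
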